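/- arXiv:cs/0701050 — 2 statements merged into one kernel-verified Lean document; each statement's English description precedes it below -/
import Mathlib

section
/- The following two statements are equivalent: (i) for all independent real random variables X, Y with probability densities and finite differential entropies, exp(2·h(X+Y)) ≥ exp(2·h(X)) + exp(2·h(Y)); (ii) for all independent real random variables U, V with probability densities and finite differential entropies and every λ with 0 ≤ λ ≤ 1, h(√λ·U + √(1−λ)·V) ≥ λ·h(U) + (1−λ)·h(V). -/
open MeasureTheory ProbabilityTheory Real
open scoped NNReal ENNReal

/-- Differential entropy `h(X) = E[-log p(X)]` of a random variable `X : Ω → E`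
with respect to a reference measure `ν` on `E` (`p` is the pdf of `X`). -/
noncomputable def diffEntropy {Ω E : Type*} [MeasurableSpace Ω] [MeasurableSpace E]
    (μ : Measure Ω) (ν : Measure E) (X : Ω → E) : ℝ :=
  ∫ ω, - Real.log ((MeasureTheory.pdf X μ ν (X ω)).toReal) ∂μ

lemma aux_map_const_mul (c : ℝ) (hc : c ≠ 0) (p : ℝ → ℝ≥0∞) (hp : Measurable p) :
    Measure.map (c * ·) (volume.withDensity p)
      = volume.withDensity (fun x => ENNReal.ofReal |c⁻¹| * p (c⁻¹ * x)) := by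
  have hmeas : Measurable fun x => ENNReal.ofReal |c⁻¹| * p (c⁻¹ * x) :=
    (hp.comp (measurable_const_mul c⁻¹)).const_mul _
  ext s hs
  rw [Measure.map_apply (measurable_const_mul c) hs,
    withDensity_apply _ ((measurable_const_mul c) hs), withDensity_apply _ hs]
  have h1 : (volume : Measure ℝ) = ENNReal.ofReal |c| • Measure.map (c * ·) volume :=
    (Real.smul_map_volume_mul_left hc).symm
  conv_rhs => rw [h1]
  rw [Measure.restrict_smul, lintegral_smul_measure,
    setLIntegral_map hs hmeas (measurable_const_mul c)]
  simp only [inv_mul_cancel_left₀ hc]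
  rw [lintegral_const_mul _ hp, smul_eq_mul, ← mul_assoc, ← ENNReal.ofReal_mul (abs_nonneg _),
    abs_inv, mul_inv_cancel₀ (abs_ne_zero.mpr hc), ENNReal.ofReal_one, one_mul]

variable {Ω : Type} [MeasurableSpace Ω] (μ : Measure Ω)

lemma aux_map_eq (X : Ω → ℝ) (hX : Measurable X) [HasPDF X μ volume] (c : ℝ) (hc : c ≠ 0) :
    Measure.map (fun ω => c * X ω) μ
      = volume.withDensity (fun x => ENNReal.ofReal |c⁻¹| * pdf X μ volume (c⁻¹ * x)) := by
  have h : (fun ω => c * X ω) = (c * ·) ∘ X := rfl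
  rw [h, ← Measure.map_map (measurable_const_mul c) hX, map_eq_withDensity_pdf X μ volume,
    aux_map_const_mul c hc _ (measurable_pdf X μ volume)]

lemma hasPDF_const_mul (X : Ω → ℝ) (hX : Measurable X) [HasPDF X μ volume] (c : ℝ) (hc : c ≠ 0) :
    HasPDF (fun ω => c * X ω) μ volume := by
  have hmeas : Measurable fun x => ENNReal.ofReal |c⁻¹| * pdf X μ volume (c⁻¹ * x) :=
    ((measurable_pdf X μ volume).comp (measurable_const_mul c⁻¹)).const_mul _
  exact hasPDF_of_map_eq_withDensity (hX.const_mul c).aemeasurable _ hmeas.aemeasurable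
    (aux_map_eq μ X hX c hc)

lemma pdf_const_mul_ae [IsProbabilityMeasure μ] (X : Ω → ℝ) (hX : Measurable X)
    [HasPDF X μ volume] (c : ℝ) (hc : c ≠ 0) :
    pdf (fun ω => c * X ω) μ volume =ᵐ[volume]
      fun x => ENNReal.ofReal |c⁻¹| * pdf X μ volume (c⁻¹ * x) := by
  haveI := hasPDF_const_mul μ X hX c hc
  have hmeas : Measurable fun x => ENNReal.ofReal |c⁻¹| * pdf X μ volume (c⁻¹ * x) :=
    ((measurable_pdf X μ volume).comp (measurable_const_mul c⁻¹)).const_mul _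
  exact (pdf.eq_of_map_eq_withDensity _ hmeas.aemeasurable).mp (aux_map_eq μ X hX c hc)

lemma log_pdf_const_mul_ae [IsProbabilityMeasure μ] (X : Ω → ℝ) (hX : Measurable X)
    [HasPDF X μ volume] (c : ℝ) (hc : c ≠ 0) :
    ∀ᵐ ω ∂μ, Real.log ((pdf (fun ω => c * X ω) μ volume (c * X ω)).toReal)
      = Real.log |c⁻¹| + Real.log ((pdf X μ volume (X ω)).toReal) := by
  haveI := hasPDF_const_mul μ X hX c hc
  have hacT : Measure.map (fun ω => c * X ω) μ ≪ volume := HasPDF.absolutelyContinuous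
  have hacX : Measure.map X μ ≪ volume := HasPDF.absolutelyContinuous
  have h1 := (pdf_const_mul_ae μ X hX c hc).filter_mono hacT.ae_le
  have h2 : ∀ᵐ ω ∂μ, pdf (fun ω => c * X ω) μ volume (c * X ω)
      = ENNReal.ofReal |c⁻¹| * pdf X μ volume (c⁻¹ * (c * X ω)) :=
    ae_of_ae_map (hX.const_mul c).aemeasurable h1
  have hpos : ∀ᵐ ω ∂μ, 0 < pdf X μ volume (X ω) :=
    ae_of_ae_map hX.aemeasurable (Measure.rnDeriv_pos hacX)
  have hlt : ∀ᵐ ω ∂μ, pdf X μ volume (X ω) < ∞ :=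
    ae_of_ae_map hX.aemeasurable (hacX.ae_le (Measure.rnDeriv_lt_top _ _))
  filter_upwards [h2, hpos, hlt] with ω hω hωp hωl
  rw [hω, inv_mul_cancel_left₀ hc, ENNReal.toReal_mul, ENNReal.toReal_ofReal (abs_nonneg _),
    Real.log_mul (abs_ne_zero.mpr (inv_ne_zero hc))
      (ENNReal.toReal_ne_zero.mpr ⟨hωp.ne', hωl.ne⟩)]

lemma diffEntropy_const_mul [IsProbabilityMeasure μ] (X : Ω → ℝ) (hX : Measurable X)
    [HasPDF X μ volume]
    (hint : Integrable (fun ω => Real.log ((pdf X μ volume (X ω)).toReal)) μ)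
    (c : ℝ) (hc : c ≠ 0) :
    diffEntropy μ volume (fun ω => c * X ω) = diffEntropy μ volume X + Real.log |c|
    ∧ Integrable
      (fun ω => Real.log ((pdf (fun ω => c * X ω) μ volume (c * X ω)).toReal)) μ := by
  have heq := log_pdf_const_mul_ae μ X hX c hc
  have hint2 : Integrable
      (fun ω => Real.log |c⁻¹| + Real.log ((pdf X μ volume (X ω)).toReal)) μ :=
    (integrable_const _).add hint
  refine ⟨?_, hint2.congr (heq.mono fun ω h => h.symm)⟩
  have h3 : diffEntropy μ volume (fun ω => c * X ω)
      = ∫ ω, (Real.log |c| + - Real.log ((pdf X μ volume (X ω)).toReal)) ∂μ := by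
    refine integral_congr_ae (heq.mono fun ω h => ?_)
    show -Real.log _ = _
    rw [h, abs_inv, Real.log_inv]
    ring
  have hintneg : Integrable (fun ω => - Real.log ((pdf X μ volume (X ω)).toReal)) μ := hint.neg
  rw [h3, integral_add (integrable_const _) hintneg, integral_const]
  simp only [probReal_univ, smul_eq_mul, one_mul]
  unfold diffEntropy
  rw [integral_neg]
  ring

/-- Equivalence of the two standard formulations of the entropy power inequality:
(i) `exp(2 h(X+Y)) ≥ exp(2 h(X)) + exp(2 h(Y))` for all independent `X, Y` with densities
and finite differential entropies, and (ii) the concavity form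
`h(√λ U + √(1-λ) V) ≥ λ h(U) + (1-λ) h(V)` for all such `U, V` and all `0 ≤ λ ≤ 1`. -/
theorem epi_iff_concavity_form :
    (∀ (Ω : Type) (_ : MeasurableSpace Ω) (μ : Measure Ω), IsProbabilityMeasure μ →
      ∀ (X Y : Ω → ℝ), Measurable X → Measurable Y → IndepFun X Y μ →
        HasPDF X μ volume → HasPDF Y μ volume →
        Integrable (fun ω => Real.log ((MeasureTheory.pdf X μ volume (X ω)).toReal)) μ →
        Integrable (fun ω => Real.log ((MeasureTheory.pdf Y μ volume (Y ω)).toReal)) μ →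
        Real.exp (2 * diffEntropy μ volume (fun ω => X ω + Y ω))
          ≥ Real.exp (2 * diffEntropy μ volume X) + Real.exp (2 * diffEntropy μ volume Y))
    ↔
    (∀ (Ω : Type) (_ : MeasurableSpace Ω) (μ : Measure Ω), IsProbabilityMeasure μ →
      ∀ (U V : Ω → ℝ), Measurable U → Measurable V → IndepFun U V μ →
        HasPDF U μ volume → HasPDF V μ volume →
        Integrable (fun ω => Real.log ((MeasureTheory.pdf U μ volume (U ω)).toReal)) μ →
        Integrable (fun ω => Real.log ((MeasureTheory.pdf V μ volume (V ω)).toReal)) μ →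
        ∀ lam : ℝ, 0 ≤ lam → lam ≤ 1 →
          diffEntropy μ volume (fun ω => Real.sqrt lam * U ω + Real.sqrt (1 - lam) * V ω)
            ≥ lam * diffEntropy μ volume U + (1 - lam) * diffEntropy μ volume V) := by
  constructor
  · intro hi Ω mΩ μ hμ U V hU hV hUV hPU hPV hIU hIV lam hlam0 hlam1
    rcases eq_or_lt_of_le hlam0 with h0 | h0
    · simp only [← h0, Real.sqrt_zero, zero_mul, sub_zero, Real.sqrt_one, one_mul, zero_add]
      exact le_refl _
    rcases eq_or_lt_of_le hlam1 with h1 | h1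
    · simp only [h1, Real.sqrt_one, one_mul, sub_self, Real.sqrt_zero, zero_mul, add_zero]
      exact le_refl _
    have hcpos : 0 < Real.sqrt lam := Real.sqrt_pos.mpr h0
    have hdpos : 0 < Real.sqrt (1 - lam) := Real.sqrt_pos.mpr (by linarith)
    set c := Real.sqrt lam with hc
    set d := Real.sqrt (1 - lam) with hd
    haveI hPX : HasPDF (fun ω => c * U ω) μ volume := hasPDF_const_mul μ U hU c hcpos.ne'
    haveI hPY : HasPDF (fun ω => d * V ω) μ volume := hasPDF_const_mul μ V hV d hdpos.ne'
    have hDU := diffEntropy_const_mul μ U hU hIU c hcpos.ne'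
    have hDV := diffEntropy_const_mul μ V hV hIV d hdpos.ne'
    have hind : IndepFun (fun ω => c * U ω) (fun ω => d * V ω) μ :=
      hUV.comp (measurable_const_mul c) (measurable_const_mul d)
    have key := hi Ω mΩ μ hμ _ _ (hU.const_mul c) (hV.const_mul d) hind hPX hPY hDU.2 hDV.2
    rw [hDU.1, hDV.1] at key
    have e1 : Real.exp (2 * (diffEntropy μ volume U + Real.log |c|))
        = lam * Real.exp (2 * diffEntropy μ volume U) := by
      rw [abs_of_pos hcpos, hc, Real.log_sqrt hlam0,
        show 2 * (diffEntropy μ volume U + Real.log lam / 2)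
          = Real.log lam + 2 * diffEntropy μ volume U by ring,
        Real.exp_add, Real.exp_log h0]
    have e2 : Real.exp (2 * (diffEntropy μ volume V + Real.log |d|))
        = (1 - lam) * Real.exp (2 * diffEntropy μ volume V) := by
      rw [abs_of_pos hdpos, hd, Real.log_sqrt (by linarith),
        show 2 * (diffEntropy μ volume V + Real.log (1 - lam) / 2)
          = Real.log (1 - lam) + 2 * diffEntropy μ volume V by ring,
        Real.exp_add, Real.exp_log (by linarith)]
    rw [e1, e2] at key
    have hgm := Real.geom_mean_le_arith_mean2_weighted hlam0 (by linarith : (0:ℝ) ≤ 1 - lam)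
      (Real.exp_pos (2 * diffEntropy μ volume U)).le
      (Real.exp_pos (2 * diffEntropy μ volume V)).le (by ring)
    have hrw : Real.exp (2 * diffEntropy μ volume U) ^ lam
        * Real.exp (2 * diffEntropy μ volume V) ^ (1 - lam)
        = Real.exp (2 * (lam * diffEntropy μ volume U + (1 - lam) * diffEntropy μ volume V)) := by
      rw [← Real.exp_mul, ← Real.exp_mul, ← Real.exp_add]
      ring_nf
    rw [hrw] at hgm
    have : Real.exp (2 * (lam * diffEntropy μ volume U + (1 - lam) * diffEntropy μ volume V))
        ≤ Real.exp (2 * diffEntropy μ volume (fun ω => c * U ω + d * V ω)) := le_trans hgm key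
    have := Real.exp_le_exp.mp this
    linarith
  · intro hii Ω mΩ μ hμ X Y hX hY hXY hPX hPY hIX hIY
    set a := Real.exp (2 * diffEntropy μ volume X) with ha
    set b := Real.exp (2 * diffEntropy μ volume Y) with hb
    have hapos : 0 < a := Real.exp_pos _
    have hbpos : 0 < b := Real.exp_pos _
    have hS : 0 < a + b := by linarith
    set lam := a / (a + b) with hlam
    have hl0 : 0 < lam := div_pos hapos hS
    have hl1 : lam < 1 := (div_lt_one hS).mpr (by linarith)
    have hclpos : 0 < Real.sqrt lam := Real.sqrt_pos.mpr hl0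
    have hdlpos : 0 < Real.sqrt (1 - lam) := Real.sqrt_pos.mpr (by linarith)
    set c := (Real.sqrt lam)⁻¹ with hc
    set d := (Real.sqrt (1 - lam))⁻¹ with hd
    have hcne : c ≠ 0 := inv_ne_zero hclpos.ne'
    have hdne : d ≠ 0 := inv_ne_zero hdlpos.ne'
    haveI hPU : HasPDF (fun ω => c * X ω) μ volume := hasPDF_const_mul μ X hX c hcne
    haveI hPV : HasPDF (fun ω => d * Y ω) μ volume := hasPDF_const_mul μ Y hY d hdne
    have hDX := diffEntropy_const_mul μ X hX hIX c hcne
    have hDY := diffEntropy_const_mul μ Y hY hIY d hdne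
    have hind : IndepFun (fun ω => c * X ω) (fun ω => d * Y ω) μ :=
      hXY.comp (measurable_const_mul c) (measurable_const_mul d)
    have key := hii Ω mΩ μ hμ _ _ (hX.const_mul c) (hY.const_mul d) hind hPU hPV hDX.2 hDY.2
      lam hl0.le hl1.le
    have hfun : (fun ω => Real.sqrt lam * (c * X ω) + Real.sqrt (1 - lam) * (d * Y ω))
        = fun ω => X ω + Y ω := by
      funext ω
      rw [hc, hd, mul_inv_cancel_left₀ hclpos.ne', mul_inv_cancel_left₀ hdlpos.ne']
    rw [hfun, hDX.1, hDY.1] at key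
    have hlogc : Real.log |c| = -(Real.log lam / 2) := by
      rw [hc, abs_of_pos (inv_pos.mpr hclpos), Real.log_inv, Real.log_sqrt hl0.le]
    have hlogd : Real.log |d| = -(Real.log (1 - lam) / 2) := by
      rw [hd, abs_of_pos (inv_pos.mpr hdlpos), Real.log_inv, Real.log_sqrt (by linarith)]
    rw [hlogc, hlogd] at key
    have ea : lam * (a + b) = a := by rw [hlam]; field_simp
    have eb : (1 - lam) * (a + b) = b := by rw [hlam]; field_simp; ring
    have la : 2 * diffEntropy μ volume X = Real.log lam + Real.log (a + b) := by
      rw [← Real.log_mul hl0.ne' hS.ne', ea, ha, Real.log_exp]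
    have lb : 2 * diffEntropy μ volume Y = Real.log (1 - lam) + Real.log (a + b) := by
      rw [← Real.log_mul (by linarith : (1:ℝ) - lam ≠ 0) hS.ne', eb, hb, Real.log_exp]
    have hkey2 : lam * (diffEntropy μ volume X + -(Real.log lam / 2))
        + (1 - lam) * (diffEntropy μ volume Y + -(Real.log (1 - lam) / 2))
        = Real.log (a + b) / 2 := by
      linear_combination (lam / 2) * la + ((1 - lam) / 2) * lb
    rw [hkey2] at key
    calc Real.exp (2 * diffEntropy μ volume (fun ω => X ω + Y ω))
        ≥ Real.exp (Real.log (a + b)) := Real.exp_le_exp.mpr (by linarith)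
      _ = a + b := Real.exp_log hS
end

section
/- Let X and Y be independent real random variables with finite variances, let Z' and Z'' be standard Gaussian random variables, independent of (X, Y) and of each other, let 0 ≤ λ ≤ 1, and set W = √λ·X + √(1−λ)·Y and Z = √λ·Z' + √(1−λ)·Z''. Then for every t ≥ 0, Var(W | √t·W + Z) ≥ Var(W | √t·X + Z', √t·Y + Z''); that is, it is better to estimate the sum of independent random variables from individual noisy measurements than from the sum of these measurements. -/
open MeasureTheory ProbabilityTheory Real
open scoped NNReal ENNReal

/-- Conditional variance `Var(X|Y) = E[(X - E[X|Y])²]`, the MMSE of estimating `X` from `Y`. -/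
noncomputable def condVarNum {Ω β : Type*} [MeasurableSpace Ω] [MeasurableSpace β]
    (μ : Measure Ω) (X : Ω → ℝ) (Y : Ω → β) : ℝ :=
  ∫ ω, (X ω - (μ[X | MeasurableSpace.comap Y inferInstance]) ω) ^ 2 ∂μ

/-- The conditional expectation of an `L²` function is in `L²`. -/
lemma memLp_two_condexp_aux {Ω : Type*} {m m0 : MeasurableSpace Ω} (hm : m ≤ m0)
    (μ : Measure Ω) [IsProbabilityMeasure μ]
    {f : Ω → ℝ} (hf : MemLp f 2 μ) : MemLp (μ[f|m]) 2 μ := by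
  have hfi : Integrable f μ := hf.integrable one_le_two
  have heq := ae_eq_condExp_of_forall_setIntegral_eq hm hfi
    (g := ((condExpL2 ℝ ℝ hm (hf.toLp f) : lpMeas ℝ ℝ m 2 μ) : Lp ℝ 2 μ))
    (fun s _ _ => ((Lp.memLp _).integrable one_le_two).integrableOn)
    (fun s hs hμs => (integral_condExpL2_eq hm (hf.toLp f) hs hμs.ne).trans
      (setIntegral_congr_ae (hm s hs) ((hf.coeFn_toLp).mono fun x hx _ => hx)))
    (aestronglyMeasurable_condExpL2 hm _)
  exact (Lp.memLp _).ae_eq heq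

/-- MMSE is monotone: a finer σ-algebra gives a smaller mean-square error. -/
lemma mmse_mono_aux {Ω : Type*} {m₁ m₂ m0 : MeasurableSpace Ω}
    (h12 : m₁ ≤ m₂) (h2 : m₂ ≤ m0) (μ : Measure Ω) [IsProbabilityMeasure μ]
    {W : Ω → ℝ} (hW : MemLp W 2 μ) :
    ∫ ω, (W ω - (μ[W|m₂]) ω) ^ 2 ∂μ ≤ ∫ ω, (W ω - (μ[W|m₁]) ω) ^ 2 ∂μ := by
  have h1 : m₁ ≤ m0 := h12.trans h2
  have hWi : Integrable W μ := hW.integrable one_le_two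
  have hmE₂ : MemLp (μ[W|m₂]) 2 μ := memLp_two_condexp_aux h2 μ hW
  have hmE₁ : MemLp (μ[W|m₁]) 2 μ := memLp_two_condexp_aux h1 μ hW
  set R : Ω → ℝ := fun ω => W ω - (μ[W|m₂]) ω with hR
  set D : Ω → ℝ := fun ω => (μ[W|m₂]) ω - (μ[W|m₁]) ω with hD
  have hmR : MemLp R 2 μ := hW.sub hmE₂
  have hmD : MemLp D 2 μ := hmE₂.sub hmE₁
  have hDsm : StronglyMeasurable[m₂] D :=
    stronglyMeasurable_condExp.sub (stronglyMeasurable_condExp.mono h12)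
  -- the product `D * R` is integrable
  have hprod : Integrable (fun ω => D ω * R ω) μ := by
    have := hmR.smul (φ := D) hmD (p := 2) (q := 2) (r := 1)
    exact memLp_one_iff_integrable.mp this
  have hRint : Integrable R μ := hWi.sub integrable_condExp
  -- the cross term vanishes
  have hRcond : μ[R|m₂] =ᵐ[μ] 0 := by
    have h₁ : μ[R|m₂] =ᵐ[μ] μ[W|m₂] - μ[μ[W|m₂]|m₂] := condExp_sub hWi integrable_condExp m₂
    have h₂ : μ[μ[W|m₂]|m₂] = μ[W|m₂] :=
      condExp_of_stronglyMeasurable h2 stronglyMeasurable_condExp integrable_condExp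
    filter_upwards [h₁] with ω hω
    simp [hω, h₂]
  have hcross : ∫ ω, D ω * R ω ∂μ = 0 := by
    have h₃ : μ[fun ω => D ω * R ω|m₂] =ᵐ[μ] D * μ[R|m₂] :=
      condExp_mul_of_stronglyMeasurable_left hDsm hprod hRint
    have h₄ : ∫ ω, D ω * R ω ∂μ = ∫ ω, (μ[fun ω => D ω * R ω|m₂]) ω ∂μ :=
      (integral_condExp h2).symm
    rw [h₄, integral_congr_ae h₃]
    have : (D * μ[R|m₂] : Ω → ℝ) =ᵐ[μ] 0 := by
      filter_upwards [hRcond] with ω hω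
      simp [hω]
    rw [integral_congr_ae this]
    simp
  -- Pythagoras
  have hpt : ∀ ω, (W ω - (μ[W|m₁]) ω) ^ 2 = R ω ^ 2 + (2 * (D ω * R ω) + D ω ^ 2) := by
    intro ω; simp only [hR, hD]; ring
  have hint1 : Integrable (fun ω => R ω ^ 2) μ := hmR.integrable_sq
  have hint2 : Integrable (fun ω => D ω ^ 2) μ := hmD.integrable_sq
  calc ∫ ω, (W ω - (μ[W|m₂]) ω) ^ 2 ∂μ = ∫ ω, R ω ^ 2 ∂μ := rfl
    _ ≤ ∫ ω, R ω ^ 2 ∂μ + (2 * ∫ ω, D ω * R ω ∂μ + ∫ ω, D ω ^ 2 ∂μ) := by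
        rw [hcross, mul_zero, zero_add]
        exact le_add_of_nonneg_right (integral_nonneg fun ω => sq_nonneg _)
    _ = ∫ ω, (W ω - (μ[W|m₁]) ω) ^ 2 ∂μ := by
        have hh : ∫ ω, (W ω - (μ[W|m₁]) ω) ^ 2 ∂μ
            = ∫ ω, (R ω ^ 2 + (2 * (D ω * R ω) + D ω ^ 2)) ∂μ :=
          integral_congr_ae (Filter.Eventually.of_forall fun ω => hpt ω)
        have hint3 : Integrable (fun ω => 2 * (D ω * R ω) + D ω ^ 2) μ :=
          (hprod.const_mul 2).add hint2
        rw [hh, integral_add hint1 hint3, integral_add (hprod.const_mul 2) hint2,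
          integral_const_mul]

/-- It is better to estimate the sum of independent random variables from individual noisy
measurements than from the sum of these measurements: with `W = √λ X + √(1-λ) Y` and
`Z = √λ Z' + √(1-λ) Z''` for independent standard Gaussians `Z', Z''` independent of `(X,Y)`,
`Var(W | √t W + Z) ≥ Var(W | √t X + Z', √t Y + Z'')` for every `t ≥ 0`. -/
theorem condVar_sum_ge_condVar_individual
    {Ω : Type*} [MeasurableSpace Ω] (μ : Measure Ω) [IsProbabilityMeasure μ]
    (X Y Z' Z'' : Ω → ℝ)
    (hX : Measurable X) (hY : Measurable Y) (hZ' : Measurable Z') (hZ'' : Measurable Z'')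
    (hXvar : MemLp X 2 μ) (hYvar : MemLp Y 2 μ)
    (hXY : IndepFun X Y μ)
    (hZ'Z'' : IndepFun Z' Z'' μ)
    (hZind : IndepFun (fun ω => (X ω, Y ω)) (fun ω => (Z' ω, Z'' ω)) μ)
    (hZ'gauss : Measure.map Z' μ = gaussianReal 0 1)
    (hZ''gauss : Measure.map Z'' μ = gaussianReal 0 1)
    (lam : ℝ) (hlam0 : 0 ≤ lam) (hlam1 : lam ≤ 1)
    (W Z : Ω → ℝ)
    (hW : W = fun ω => Real.sqrt lam * X ω + Real.sqrt (1 - lam) * Y ω)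
    (hZ : Z = fun ω => Real.sqrt lam * Z' ω + Real.sqrt (1 - lam) * Z'' ω)
    (t : ℝ) (ht : 0 ≤ t) :
    condVarNum μ W (fun ω => Real.sqrt t * W ω + Z ω)
      ≥ condVarNum μ W
          (fun ω => (Real.sqrt t * X ω + Z' ω, Real.sqrt t * Y ω + Z'' ω)) := by
  -- The single observation is a measurable function of the pair of observations.
  have hW2 : MemLp W 2 μ := by
    rw [hW]
    exact (hXvar.const_mul (Real.sqrt lam)).add (hYvar.const_mul (Real.sqrt (1 - lam)))
  set g : Ω → ℝ × ℝ := fun ω => (Real.sqrt t * X ω + Z' ω, Real.sqrt t * Y ω + Z'' ω) with hg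
  set φ : ℝ × ℝ → ℝ := fun p => Real.sqrt lam * p.1 + Real.sqrt (1 - lam) * p.2 with hφ
  have hgm : Measurable g :=
    ((measurable_const.mul hX).add hZ').prodMk ((measurable_const.mul hY).add hZ'')
  have hφm : Measurable φ :=
    (measurable_const.mul measurable_fst).add (measurable_const.mul measurable_snd)
  have hcomp : (fun ω => Real.sqrt t * W ω + Z ω) = φ ∘ g := by
    funext ω
    simp only [hW, hZ, hφ, hg, Function.comp_apply]
    ring
  have h12 : MeasurableSpace.comap (fun ω => Real.sqrt t * W ω + Z ω) inferInstance
      ≤ MeasurableSpace.comap g inferInstance := by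
    rw [hcomp, ← MeasurableSpace.comap_comp]
    exact MeasurableSpace.comap_mono hφm.comap_le
  have h2 : MeasurableSpace.comap g inferInstance ≤ _ := hgm.comap_le
  exact mmse_mono_aux h12 h2 μ hW2
end
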